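/- Let G_{α}(·,·) denote the noncentral gamma cdf G_α(x, y) = e^{-y} Σ_{n≥0} G_{α+n}(x) y^n / n!, where G_α is the regularized incomplete gamma function. For x, y > 0 with x ≠ y, lim_{ε→0⁺} G_α(ε^{-1} x, ε^{-1} y) = 0 if x < y and = 1 if x > y. -/

import Mathlib

open Real Filter Topology
open MeasureTheory Set
set_option maxHeartbeats 1000000

lemma intOn (a r : ℝ) (ha : 0 < a) (hr : 0 < r) :
    IntegrableOn (fun ξ : ℝ => ξ ^ (a - 1) * Real.exp (-(r * ξ))) (Set.Ioi 0) := by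
  have h := integrableOn_rpow_mul_exp_neg_mul_rpow (s := a - 1) (p := 1) (b := r)
    (by linarith) one_pos hr
  refine h.congr_fun (fun ξ _ => by dsimp only; rw [Real.rpow_one, neg_mul]) measurableSet_Ioi

lemma gamma_eq (a : ℝ) (ha : 0 < a) :
    ∫ ξ in Set.Ioi (0:ℝ), ξ ^ (a - 1) * Real.exp (-ξ) = Real.Gamma a := by
  have h := Real.integral_rpow_mul_exp_neg_mul_Ioi ha one_pos
  simpa using h

lemma scaled_le (a r : ℝ) (ha : 0 < a) (hr : 0 < r) :
    ∫ ξ in Set.Ioi (0:ℝ), ξ ^ (a - 1) * Real.exp (-(r * ξ)) = r ^ (-a) * Real.Gamma a := by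
  rw [Real.integral_rpow_mul_exp_neg_mul_Ioi ha hr, one_div, Real.inv_rpow hr.le,
    ← Real.rpow_neg hr.le]

lemma intOn1 (a : ℝ) (ha : 0 < a) :
    IntegrableOn (fun ξ : ℝ => ξ ^ (a - 1) * Real.exp (-ξ)) (Set.Ioi 0) :=
  (intOn a 1 ha one_pos).congr_fun (fun ξ _ => by dsimp only; rw [one_mul]) measurableSet_Ioi

/-- The (regularized) gamma cdf with shape `α`. -/
noncomputable def Gcdf (α x : ℝ) : ℝ :=
  (∫ ξ in (0:ℝ)..x, ξ ^ (α - 1) * Real.exp (-ξ)) / Real.Gamma α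

/-- The noncentral gamma cdf `G_α(x, y)`. -/
noncomputable def ncGcdf (α x y : ℝ) : ℝ :=
  Real.exp (-y) * ∑' n : ℕ, Gcdf (α + n) x * y ^ n / n.factorial

lemma Gcdf_eq (a t : ℝ) (ht : 0 ≤ t) :
    Gcdf a t = (∫ ξ in Set.Ioc 0 t, ξ ^ (a - 1) * Real.exp (-ξ)) / Real.Gamma a := by
  rw [Gcdf, intervalIntegral.integral_of_le ht]

lemma int_Ioc_nonneg (a t : ℝ) :
    0 ≤ ∫ ξ in Set.Ioc (0:ℝ) t, ξ ^ (a - 1) * Real.exp (-ξ) :=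
  setIntegral_nonneg measurableSet_Ioc fun ξ hξ =>
    mul_nonneg (Real.rpow_nonneg hξ.1.le _) (Real.exp_pos _).le

lemma int_Ioc_le (a t : ℝ) (ha : 0 < a) (ht : 0 ≤ t) :
    (∫ ξ in Set.Ioc (0:ℝ) t, ξ ^ (a - 1) * Real.exp (-ξ)) ≤ Real.Gamma a := by
  rw [← gamma_eq a ha]
  refine setIntegral_mono_set (intOn1 a ha) ?_ (Set.Ioc_subset_Ioi_self).eventuallyLE
  filter_upwards [ae_restrict_mem measurableSet_Ioi] with ξ hξ
  exact mul_nonneg (Real.rpow_nonneg (le_of_lt hξ) _) (Real.exp_pos _).le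

lemma Gcdf_nonneg (a t : ℝ) (ha : 0 < a) (ht : 0 ≤ t) : 0 ≤ Gcdf a t := by
  rw [Gcdf_eq a t ht]
  exact div_nonneg (int_Ioc_nonneg a t) (Real.Gamma_nonneg_of_nonneg ha.le)

lemma Gcdf_le_one (a t : ℝ) (ha : 0 < a) (ht : 0 ≤ t) : Gcdf a t ≤ 1 := by
  rw [Gcdf_eq a t ht, div_le_one (Real.Gamma_pos_of_pos ha)]
  exact int_Ioc_le a t ha ht

lemma chernoff_low (a t s : ℝ) (ha : 0 < a) (ht : 0 ≤ t) (hs : 0 ≤ s) :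
    Gcdf a t ≤ Real.exp (s * t) * (1 + s) ^ (-a) := by
  have h1s : (0:ℝ) < 1 + s := by linarith
  rw [Gcdf_eq a t ht, div_le_iff₀ (Real.Gamma_pos_of_pos ha)]
  calc (∫ ξ in Set.Ioc (0:ℝ) t, ξ ^ (a - 1) * Real.exp (-ξ))
      ≤ ∫ ξ in Set.Ioc (0:ℝ) t,
          Real.exp (s * t) * (ξ ^ (a - 1) * Real.exp (-((1 + s) * ξ))) := by
        refine setIntegral_mono_on ((intOn1 a ha).mono_set Set.Ioc_subset_Ioi_self)
          (((intOn a (1 + s) ha h1s).mono_set Set.Ioc_subset_Ioi_self).const_mul _)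
          measurableSet_Ioc (fun ξ hξ => ?_)
        have hξ0 : 0 ≤ ξ := hξ.1.le
        have hexp : Real.exp (-ξ) ≤ Real.exp (s * t) * Real.exp (-((1 + s) * ξ)) := by
          rw [← Real.exp_add]
          apply Real.exp_le_exp.mpr
          nlinarith [hξ.2]
        calc ξ ^ (a - 1) * Real.exp (-ξ)
            ≤ ξ ^ (a - 1) * (Real.exp (s * t) * Real.exp (-((1 + s) * ξ))) :=
              mul_le_mul_of_nonneg_left hexp (Real.rpow_nonneg hξ0 _)
          _ = Real.exp (s * t) * (ξ ^ (a - 1) * Real.exp (-((1 + s) * ξ))) := by ring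
    _ = Real.exp (s * t) * ∫ ξ in Set.Ioc (0:ℝ) t, ξ ^ (a - 1) * Real.exp (-((1 + s) * ξ)) :=
        MeasureTheory.integral_const_mul _ _
    _ ≤ Real.exp (s * t) * ∫ ξ in Set.Ioi (0:ℝ), ξ ^ (a - 1) * Real.exp (-((1 + s) * ξ)) := by
        refine mul_le_mul_of_nonneg_left ?_ (Real.exp_pos _).le
        refine setIntegral_mono_set (intOn a (1+s) ha h1s) ?_
          (Set.Ioc_subset_Ioi_self).eventuallyLE
        filter_upwards [ae_restrict_mem measurableSet_Ioi] with ξ hξ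
        exact mul_nonneg (Real.rpow_nonneg (le_of_lt hξ) _) (Real.exp_pos _).le
    _ = Real.exp (s * t) * (1 + s) ^ (-a) * Real.Gamma a := by
        rw [scaled_le a (1 + s) ha h1s]; ring

lemma chernoff_high (a t s : ℝ) (ha : 0 < a) (ht : 0 ≤ t) (hs0 : 0 ≤ s) (hs1 : s < 1) :
    1 - Real.exp (-(s * t)) * (1 - s) ^ (-a) ≤ Gcdf a t := by
  have h1s : (0:ℝ) < 1 - s := by linarith
  have hint1 : IntegrableOn (fun ξ : ℝ => ξ ^ (a - 1) * Real.exp (-ξ)) (Set.Ioc 0 t) :=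
    (intOn1 a ha).mono_set Set.Ioc_subset_Ioi_self
  have hint2 : IntegrableOn (fun ξ : ℝ => ξ ^ (a - 1) * Real.exp (-ξ)) (Set.Ioi t) :=
    (intOn1 a ha).mono_set (Set.Ioi_subset_Ioi ht)
  have hsplit : (∫ ξ in Set.Ioc (0:ℝ) t, ξ ^ (a - 1) * Real.exp (-ξ))
      + (∫ ξ in Set.Ioi t, ξ ^ (a - 1) * Real.exp (-ξ)) = Real.Gamma a := by
    rw [← setIntegral_union (Set.Ioc_disjoint_Ioi le_rfl) measurableSet_Ioi hint1 hint2,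
      Set.Ioc_union_Ioi_eq_Ioi ht, gamma_eq a ha]
  have htail : (∫ ξ in Set.Ioi t, ξ ^ (a - 1) * Real.exp (-ξ))
      ≤ Real.exp (-(s * t)) * ((1 - s) ^ (-a) * Real.Gamma a) := by
    calc (∫ ξ in Set.Ioi t, ξ ^ (a - 1) * Real.exp (-ξ))
        ≤ ∫ ξ in Set.Ioi t,
            Real.exp (-(s * t)) * (ξ ^ (a - 1) * Real.exp (-((1 - s) * ξ))) := by
          refine setIntegral_mono_on hint2
            (((intOn a (1 - s) ha h1s).mono_set (Set.Ioi_subset_Ioi ht)).const_mul _)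
            measurableSet_Ioi (fun ξ hξ => ?_)
          have hξ0 : 0 ≤ ξ := le_trans ht (le_of_lt hξ)
          have hexp : Real.exp (-ξ) ≤ Real.exp (-(s * t)) * Real.exp (-((1 - s) * ξ)) := by
            rw [← Real.exp_add]
            apply Real.exp_le_exp.mpr
            have : t ≤ ξ := le_of_lt hξ
            nlinarith
          calc ξ ^ (a - 1) * Real.exp (-ξ)
              ≤ ξ ^ (a - 1) * (Real.exp (-(s * t)) * Real.exp (-((1 - s) * ξ))) :=
                mul_le_mul_of_nonneg_left hexp (Real.rpow_nonneg hξ0 _)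
            _ = Real.exp (-(s * t)) * (ξ ^ (a - 1) * Real.exp (-((1 - s) * ξ))) := by ring
      _ = Real.exp (-(s * t)) * ∫ ξ in Set.Ioi t, ξ ^ (a - 1) * Real.exp (-((1 - s) * ξ)) :=
          MeasureTheory.integral_const_mul _ _
      _ ≤ Real.exp (-(s * t)) * ∫ ξ in Set.Ioi (0:ℝ), ξ ^ (a - 1) * Real.exp (-((1 - s) * ξ)) := by
          refine mul_le_mul_of_nonneg_left ?_ (Real.exp_pos _).le
          refine setIntegral_mono_set (intOn a (1 - s) ha h1s) ?_
            ((Set.Ioi_subset_Ioi ht)).eventuallyLE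
          filter_upwards [ae_restrict_mem measurableSet_Ioi] with ξ hξ
          exact mul_nonneg (Real.rpow_nonneg (le_of_lt hξ) _) (Real.exp_pos _).le
      _ = Real.exp (-(s * t)) * ((1 - s) ^ (-a) * Real.Gamma a) := by
          rw [scaled_le a (1 - s) ha h1s]
  have hΓ : 0 < Real.Gamma a := Real.Gamma_pos_of_pos ha
  rw [Gcdf_eq a t ht, le_div_iff₀ hΓ]
  nlinarith [hsplit, htail]

lemma exp_tsum (t : ℝ) : ∑' n : ℕ, t ^ n / n.factorial = Real.exp t := by
  rw [Real.exp_eq_exp_ℝ]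
  exact (NormedSpace.expSeries_div_hasSum_exp t).tsum_eq

section est
variable {α X Y : ℝ} (hα : 0 < α) (hX : 0 ≤ X) (hY : 0 ≤ Y)

lemma f_bounds (hα : 0 < α) (hX : 0 ≤ X) (hY : 0 ≤ Y) (n : ℕ) :
    0 ≤ Gcdf (α + n) X * Y ^ n / n.factorial ∧
      Gcdf (α + n) X * Y ^ n / n.factorial ≤ Y ^ n / n.factorial := by
  have h0 : (0:ℝ) < α + n := by positivity
  constructor
  · exact div_nonneg (mul_nonneg (Gcdf_nonneg _ _ h0 hX) (pow_nonneg hY n)) (by positivity)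
  · apply div_le_div_of_nonneg_right ?_ (by positivity)
    calc Gcdf (α + n) X * Y ^ n ≤ 1 * Y ^ n :=
          mul_le_mul_of_nonneg_right (Gcdf_le_one _ _ h0 hX) (pow_nonneg hY n)
      _ = Y ^ n := one_mul _

lemma f_summable (hα : 0 < α) (hX : 0 ≤ X) (hY : 0 ≤ Y) :
    Summable (fun n : ℕ => Gcdf (α + n) X * Y ^ n / n.factorial) :=
  Summable.of_nonneg_of_le (fun n => (f_bounds hα hX hY n).1)
    (fun n => (f_bounds hα hX hY n).2) (Real.summable_pow_div_factorial Y)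

lemma ncGcdf_nonneg (hα : 0 < α) (hX : 0 ≤ X) (hY : 0 ≤ Y) : 0 ≤ ncGcdf α X Y :=
  mul_nonneg (Real.exp_pos _).le (tsum_nonneg fun n => (f_bounds hα hX hY n).1)

lemma ncGcdf_le_one (hα : 0 < α) (hX : 0 ≤ X) (hY : 0 ≤ Y) : ncGcdf α X Y ≤ 1 := by
  rw [ncGcdf]
  calc Real.exp (-Y) * ∑' n : ℕ, Gcdf (α + n) X * Y ^ n / n.factorial
      ≤ Real.exp (-Y) * ∑' n : ℕ, Y ^ n / n.factorial := by
        refine mul_le_mul_of_nonneg_left ?_ (Real.exp_pos _).le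
        exact (f_summable hα hX hY).tsum_le_tsum (fun n => (f_bounds hα hX hY n).2)
          (Real.summable_pow_div_factorial Y)
    _ = 1 := by rw [exp_tsum, ← Real.exp_add]; simp
end est

lemma head_bound {Y r : ℝ} (hY : 0 ≤ Y) (hr0 : 0 < r) (hr1 : r ≤ 1) (M : ℕ) :
    ∑ n ∈ Finset.range M, Y ^ n / n.factorial ≤ Real.exp (r * Y) / r ^ M := by
  rw [le_div_iff₀ (pow_pos hr0 M)]
  calc (∑ n ∈ Finset.range M, Y ^ n / n.factorial) * r ^ M
      = ∑ n ∈ Finset.range M, r ^ M * (Y ^ n / n.factorial) := by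
        rw [Finset.sum_mul]; exact Finset.sum_congr rfl fun n _ => by ring
    _ ≤ ∑ n ∈ Finset.range M, (r * Y) ^ n / n.factorial := by
        refine Finset.sum_le_sum fun n hn => ?_
        rw [mul_pow, mul_div_assoc]
        refine mul_le_mul_of_nonneg_right ?_ (by positivity)
        exact pow_le_pow_of_le_one hr0.le hr1 (Finset.mem_range.mp hn).le
    _ ≤ Real.exp (r * Y) := Real.sum_le_exp_of_nonneg (mul_nonneg hr0.le hY) M

lemma tail_bound {Y r : ℝ} (hY : 0 ≤ Y) (hr1 : 1 ≤ r) (M : ℕ) :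
    ∑' n : ℕ, Y ^ (n + M) / (n + M).factorial ≤ Real.exp (r * Y) / r ^ M := by
  have hr0 : (0:ℝ) < r := lt_of_lt_of_le one_pos hr1
  have hsg : Summable (fun n : ℕ => Y ^ (n + M) / (n + M).factorial) :=
    (summable_nat_add_iff M).mpr (Real.summable_pow_div_factorial Y)
  have hsrg : Summable (fun n : ℕ => (r * Y) ^ (n + M) / (n + M).factorial) :=
    (summable_nat_add_iff M).mpr (Real.summable_pow_div_factorial (r * Y))
  rw [le_div_iff₀ (pow_pos hr0 M), ← tsum_mul_right]
  calc (∑' n : ℕ, Y ^ (n + M) / (n + M).factorial * r ^ M)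
      ≤ ∑' n : ℕ, (r * Y) ^ (n + M) / (n + M).factorial := by
        refine (hsg.mul_right _).tsum_le_tsum (fun n => ?_) hsrg
        rw [mul_pow, mul_comm ((r:ℝ) ^ (n + M)), mul_div_right_comm]
        exact mul_le_mul_of_nonneg_left (pow_le_pow_right₀ hr1 (Nat.le_add_left M n))
          (by positivity)
    _ ≤ Real.exp (r * Y) := by
        have h := Summable.sum_add_tsum_nat_add M (Real.summable_pow_div_factorial (r * Y))
        rw [exp_tsum (r * Y)] at h
        have hpos : 0 ≤ ∑ n ∈ Finset.range M, (r * Y) ^ n / n.factorial :=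
          Finset.sum_nonneg fun n _ => by positivity
        linarith

lemma exp_tail_le {Y : ℝ} (hY : 0 ≤ Y) (M : ℕ) :
    ∑' n : ℕ, Y ^ (n + M) / (n + M).factorial ≤ Real.exp Y := by
  have h := Summable.sum_add_tsum_nat_add M (Real.summable_pow_div_factorial Y)
  rw [exp_tsum Y] at h
  have hpos : 0 ≤ ∑ n ∈ Finset.range M, Y ^ n / n.factorial :=
    Finset.sum_nonneg fun n _ => by positivity
  linarith

lemma upper_est {α X Y : ℝ} (hα : 0 < α) (hX : 0 ≤ X) (hY : 0 ≤ Y) (M : ℕ) {r s : ℝ}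
    (hr0 : 0 < r) (hr1 : r ≤ 1) (hs : 0 ≤ s) :
    ncGcdf α X Y ≤ Real.exp ((r - 1) * Y) / r ^ M
      + Real.exp (s * X) * (1 + s) ^ (-(α + (M:ℝ))) := by
  have hsf := f_summable hα hX hY
  have hsplit := (Summable.sum_add_tsum_nat_add M hsf).symm
  have htail : (∑' n : ℕ, Gcdf (α + ↑(n + M)) X * Y ^ (n + M) / (n + M).factorial)
      ≤ Real.exp (s * X) * (1 + s) ^ (-(α + (M:ℝ))) * Real.exp Y := by
    calc (∑' n : ℕ, Gcdf (α + ↑(n + M)) X * Y ^ (n + M) / (n + M).factorial)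
        ≤ ∑' n : ℕ, Real.exp (s * X) * (1 + s) ^ (-(α + (M:ℝ)))
            * (Y ^ (n + M) / (n + M).factorial) := by
          refine ((summable_nat_add_iff M).mpr hsf).tsum_le_tsum (fun n => ?_)
            (((summable_nat_add_iff M).mpr (Real.summable_pow_div_factorial Y)).mul_left _)
          have h0 : (0:ℝ) < α + ↑(n + M) := by positivity
          have hG : Gcdf (α + ↑(n + M)) X
              ≤ Real.exp (s * X) * (1 + s) ^ (-(α + (M:ℝ))) := by
            refine le_trans (chernoff_low _ _ _ h0 hX hs) ?_
            refine mul_le_mul_of_nonneg_left ?_ (Real.exp_pos _).le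
            refine Real.rpow_le_rpow_of_exponent_le (by linarith) ?_
            push_cast
            have : (0:ℝ) ≤ n := Nat.cast_nonneg n
            linarith
          calc Gcdf (α + ↑(n + M)) X * Y ^ (n + M) / (n + M).factorial
              = Gcdf (α + ↑(n + M)) X * (Y ^ (n + M) / (n + M).factorial) := by ring
            _ ≤ _ := mul_le_mul_of_nonneg_right hG (by positivity)
      _ = Real.exp (s * X) * (1 + s) ^ (-(α + (M:ℝ)))
            * ∑' n : ℕ, Y ^ (n + M) / (n + M).factorial := tsum_mul_left
      _ ≤ Real.exp (s * X) * (1 + s) ^ (-(α + (M:ℝ))) * Real.exp Y := by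
          refine mul_le_mul_of_nonneg_left (exp_tail_le hY M) ?_
          have h1s : (0:ℝ) < 1 + s := by linarith
          positivity
  have hhead : (∑ n ∈ Finset.range M, Gcdf (α + n) X * Y ^ n / n.factorial)
      ≤ Real.exp (r * Y) / r ^ M :=
    le_trans (Finset.sum_le_sum fun n _ => (f_bounds hα hX hY n).2) (head_bound hY hr0 hr1 M)
  rw [ncGcdf, hsplit]
  have e1 : Real.exp (-Y) * Real.exp (r * Y) = Real.exp ((r - 1) * Y) := by
    rw [← Real.exp_add]; ring_nf
  have e2 : Real.exp (-Y) * Real.exp Y = 1 := by rw [← Real.exp_add]; simp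
  calc Real.exp (-Y) * ((∑ n ∈ Finset.range M, Gcdf (α + n) X * Y ^ n / n.factorial)
        + ∑' n : ℕ, Gcdf (α + ↑(n + M)) X * Y ^ (n + M) / (n + M).factorial)
      ≤ Real.exp (-Y) * (Real.exp (r * Y) / r ^ M
          + Real.exp (s * X) * (1 + s) ^ (-(α + (M:ℝ))) * Real.exp Y) :=
        mul_le_mul_of_nonneg_left (add_le_add hhead htail) (Real.exp_pos _).le
    _ = Real.exp ((r - 1) * Y) / r ^ M + Real.exp (s * X) * (1 + s) ^ (-(α + (M:ℝ))) := by
        linear_combination ((r:ℝ) ^ M)⁻¹ * e1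
          + (Real.exp (s * X) * (1 + s) ^ (-(α + (M:ℝ)))) * e2

lemma lower_est {α X Y : ℝ} (hα : 0 < α) (hX : 0 ≤ X) (hY : 0 ≤ Y) (M : ℕ) {r s : ℝ}
    (hr1 : 1 ≤ r) (hs0 : 0 ≤ s) (hs1 : s < 1) :
    1 - Real.exp ((r - 1) * Y) / r ^ M - Real.exp (-(s * X)) * (1 - s) ^ (-(α + (M:ℝ)))
      ≤ ncGcdf α X Y := by
  have h1s : (0:ℝ) < 1 - s := by linarith
  have hr0 : (0:ℝ) < r := lt_of_lt_of_le one_pos hr1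
  have hA : (0:ℝ) ≤ Real.exp ((r - 1) * Y) / r ^ M := by positivity
  have hB : (0:ℝ) ≤ Real.exp (-(s * X)) * (1 - s) ^ (-(α + (M:ℝ))) := by positivity
  have hsf := f_summable hα hX hY
  have step1 : Real.exp (-Y) * (∑ n ∈ Finset.range M, Gcdf (α + n) X * Y ^ n / n.factorial)
      ≤ ncGcdf α X Y := by
    rw [ncGcdf, ← Summable.sum_add_tsum_nat_add M hsf]
    refine mul_le_mul_of_nonneg_left ?_ (Real.exp_pos _).le
    have h0 : 0 ≤ ∑' n : ℕ, Gcdf (α + ↑(n + M)) X * Y ^ (n + M) / (n + M).factorial :=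
      tsum_nonneg fun n => (f_bounds hα hX hY (n + M)).1
    linarith
  have step2 : (1 - Real.exp (-(s * X)) * (1 - s) ^ (-(α + (M:ℝ))))
        * (∑ n ∈ Finset.range M, Y ^ n / n.factorial)
      ≤ ∑ n ∈ Finset.range M, Gcdf (α + n) X * Y ^ n / n.factorial := by
    rw [Finset.mul_sum]
    refine Finset.sum_le_sum fun n hn => ?_
    have h0 : (0:ℝ) < α + n := by positivity
    have hBn : Real.exp (-(s * X)) * (1 - s) ^ (-(α + (n:ℝ)))
        ≤ Real.exp (-(s * X)) * (1 - s) ^ (-(α + (M:ℝ))) := by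
      refine mul_le_mul_of_nonneg_left ?_ (Real.exp_pos _).le
      refine Real.rpow_le_rpow_of_exponent_ge h1s (by linarith) ?_
      have hn' : (n:ℝ) ≤ M := Nat.cast_le.mpr (Finset.mem_range.mp hn).le
      linarith
    have hG : 1 - Real.exp (-(s * X)) * (1 - s) ^ (-(α + (M:ℝ))) ≤ Gcdf (α + n) X := by
      have h := chernoff_high (α + n) X s h0 hX hs0 hs1
      linarith
    calc (1 - Real.exp (-(s * X)) * (1 - s) ^ (-(α + (M:ℝ)))) * (Y ^ n / n.factorial)
        ≤ Gcdf (α + n) X * (Y ^ n / n.factorial) :=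
          mul_le_mul_of_nonneg_right hG (by positivity)
      _ = Gcdf (α + n) X * Y ^ n / n.factorial := by ring
  have e1 : Real.exp (-Y) * Real.exp (r * Y) = Real.exp ((r - 1) * Y) := by
    rw [← Real.exp_add]; ring_nf
  have e2 : Real.exp (-Y) * Real.exp Y = 1 := by rw [← Real.exp_add]; simp
  have hsum := Summable.sum_add_tsum_nat_add M (Real.summable_pow_div_factorial Y)
  rw [exp_tsum Y] at hsum
  have h3 : Real.exp (-Y) * (Real.exp (r * Y) / r ^ M)
      = Real.exp ((r - 1) * Y) / r ^ M := by
    rw [show Real.exp (-Y) * (Real.exp (r * Y) / r ^ M)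
      = Real.exp (-Y) * Real.exp (r * Y) / r ^ M from by ring, e1]
  have h5 : Real.exp (-Y) * (∑' n : ℕ, Y ^ (n + M) / (n + M).factorial)
      ≤ Real.exp ((r - 1) * Y) / r ^ M := by
    calc Real.exp (-Y) * (∑' n : ℕ, Y ^ (n + M) / (n + M).factorial)
        ≤ Real.exp (-Y) * (Real.exp (r * Y) / r ^ M) :=
          mul_le_mul_of_nonneg_left (tail_bound hY hr1 M) (Real.exp_pos _).le
      _ = _ := h3
  have h4 : Real.exp (-Y) * (∑ n ∈ Finset.range M, Y ^ n / n.factorial)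
      + Real.exp (-Y) * (∑' n : ℕ, Y ^ (n + M) / (n + M).factorial) = 1 := by
    rw [← mul_add, hsum, e2]
  have hP2 : 1 - Real.exp ((r - 1) * Y) / r ^ M
      ≤ Real.exp (-Y) * (∑ n ∈ Finset.range M, Y ^ n / n.factorial) := by linarith
  have hP1 : Real.exp (-Y) * (∑ n ∈ Finset.range M, Y ^ n / n.factorial) ≤ 1 := by
    have h6 : (∑ n ∈ Finset.range M, Y ^ n / n.factorial) ≤ Real.exp Y :=
      Real.sum_le_exp_of_nonneg hY M
    nlinarith [Real.exp_pos (-Y)]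
  calc 1 - Real.exp ((r - 1) * Y) / r ^ M - Real.exp (-(s * X)) * (1 - s) ^ (-(α + (M:ℝ)))
      ≤ (1 - Real.exp (-(s * X)) * (1 - s) ^ (-(α + (M:ℝ))))
          * (Real.exp (-Y) * (∑ n ∈ Finset.range M, Y ^ n / n.factorial)) := by
        nlinarith [mul_nonneg hB (sub_nonneg.mpr hP1)]
    _ = Real.exp (-Y) * ((1 - Real.exp (-(s * X)) * (1 - s) ^ (-(α + (M:ℝ))))
          * (∑ n ∈ Finset.range M, Y ^ n / n.factorial)) := by ring
    _ ≤ Real.exp (-Y) * (∑ n ∈ Finset.range M, Gcdf (α + n) X * Y ^ n / n.factorial) :=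
        mul_le_mul_of_nonneg_left step2 (Real.exp_pos _).le
    _ ≤ ncGcdf α X Y := step1

lemma key_neg {c d : ℝ} (hc : 0 < c) (hd : 0 < d) (hne : c ≠ d) :
    c - d - c * Real.log (c / d) < 0 := by
  have hne' : d / c ≠ 1 := by
    intro h
    exact hne ((div_eq_one_iff_eq hc.ne').mp h).symm
  have h := Real.log_lt_sub_one_of_pos (div_pos hd hc) hne'
  have hlog : Real.log (c / d) = -Real.log (d / c) := by
    rw [Real.log_div hc.ne' hd.ne', Real.log_div hd.ne' hc.ne']; ring
  have h2 : c * Real.log (d / c) < c * (d / c - 1) := mul_lt_mul_of_pos_left h hc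
  have h3 : c * (d / c - 1) = d - c := by field_simp
  rw [hlog]
  nlinarith

lemma exp_aux {K : ℝ} (C : ℝ) (hK : K < 0) :
    Tendsto (fun ε : ℝ => Real.exp (ε⁻¹ * K + C)) (𝓝[>] 0) (𝓝 0) := by
  apply Real.tendsto_exp_atBot.comp
  apply Filter.tendsto_atBot_add_const_right
  exact tendsto_inv_nhdsGT_zero.atTop_mul_const_of_neg hK

lemma case1_bound {α x y c r s : ℝ} (hα : 0 < α) (hx : 0 < x) (hy : 0 < y) (hc : 0 < c)
    (hr0 : 0 < r) (hr1 : r < 1) (hs0 : 0 < s) {ε : ℝ} (hε : 0 < ε) :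
    ncGcdf α (ε⁻¹ * x) (ε⁻¹ * y)
      ≤ Real.exp (ε⁻¹ * ((r - 1) * y - c * Real.log r) + (-Real.log r))
        + Real.exp (ε⁻¹ * (s * x - c * Real.log (1 + s)) + 0) := by
  have hE : 0 < ε⁻¹ := inv_pos.mpr hε
  set E := ε⁻¹ with hEdef
  set M := ⌈E * c⌉₊ with hMdef
  have hM1 : E * c ≤ (M : ℝ) := Nat.le_ceil _
  have hM2 : (M : ℝ) ≤ E * c + 1 := (Nat.ceil_lt_add_one (by positivity)).le
  have h := upper_est hα (by positivity : (0:ℝ) ≤ E * x) (by positivity : (0:ℝ) ≤ E * y)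
    M hr0 hr1.le hs0.le
  refine le_trans h (add_le_add ?_ ?_)
  · have hrM : (r : ℝ) ^ M = Real.exp (Real.log r * M) := by
      rw [← Real.rpow_natCast r M, Real.rpow_def_of_pos hr0]
    rw [hrM, ← Real.exp_sub]
    apply Real.exp_le_exp.mpr
    have hlr : Real.log r < 0 := Real.log_neg hr0 hr1
    have key : (-Real.log r) * (M : ℝ) ≤ (-Real.log r) * (E * c + 1) :=
      mul_le_mul_of_nonneg_left hM2 (neg_nonneg.mpr hlr.le)
    nlinarith [key]
  · have h1s : (0:ℝ) < 1 + s := by linarith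
    rw [Real.rpow_def_of_pos h1s, ← Real.exp_add]
    apply Real.exp_le_exp.mpr
    have hls : 0 < Real.log (1 + s) := Real.log_pos (by linarith)
    have key : Real.log (1 + s) * (E * c) ≤ Real.log (1 + s) * (M : ℝ) :=
      mul_le_mul_of_nonneg_left hM1 hls.le
    nlinarith [key, mul_nonneg hls.le hα.le]

lemma case2_bound {α x y c r s : ℝ} (hα : 0 < α) (hx : 0 < x) (hy : 0 < y) (hc : 0 < c)
    (hr1 : 1 < r) (hs0 : 0 < s) (hs1 : s < 1) {ε : ℝ} (hε : 0 < ε) :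
    1 - Real.exp (ε⁻¹ * ((r - 1) * y - c * Real.log r) + 0)
      - Real.exp (ε⁻¹ * (-(s * x) - c * Real.log (1 - s)) + (-(α + 1) * Real.log (1 - s)))
      ≤ ncGcdf α (ε⁻¹ * x) (ε⁻¹ * y) := by
  have hE : 0 < ε⁻¹ := inv_pos.mpr hε
  set E := ε⁻¹ with hEdef
  set M := ⌈E * c⌉₊ with hMdef
  have hM1 : E * c ≤ (M : ℝ) := Nat.le_ceil _
  have hM2 : (M : ℝ) ≤ E * c + 1 := (Nat.ceil_lt_add_one (by positivity)).le
  have hr0 : (0:ℝ) < r := lt_trans one_pos hr1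
  have h := lower_est hα (by positivity : (0:ℝ) ≤ E * x) (by positivity : (0:ℝ) ≤ E * y)
    M hr1.le hs0.le hs1
  refine le_trans ?_ h
  have hA : Real.exp ((r - 1) * (E * y)) / r ^ M
      ≤ Real.exp (E * ((r - 1) * y - c * Real.log r) + 0) := by
    have hrM : (r : ℝ) ^ M = Real.exp (Real.log r * M) := by
      rw [← Real.rpow_natCast r M, Real.rpow_def_of_pos hr0]
    rw [hrM, ← Real.exp_sub]
    apply Real.exp_le_exp.mpr
    have hlr : 0 < Real.log r := Real.log_pos hr1
    have key : Real.log r * (E * c) ≤ Real.log r * (M : ℝ) :=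
      mul_le_mul_of_nonneg_left hM1 hlr.le
    nlinarith [key]
  have hB : Real.exp (-(s * (E * x))) * (1 - s) ^ (-(α + (M:ℝ)))
      ≤ Real.exp (E * (-(s * x) - c * Real.log (1 - s)) + (-(α + 1) * Real.log (1 - s))) := by
    have h1s : (0:ℝ) < 1 - s := by linarith
    rw [Real.rpow_def_of_pos h1s, ← Real.exp_add]
    apply Real.exp_le_exp.mpr
    have hls : Real.log (1 - s) < 0 := Real.log_neg h1s (by linarith)
    have key : (-Real.log (1 - s)) * (M : ℝ) ≤ (-Real.log (1 - s)) * (E * c + 1) :=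
      mul_le_mul_of_nonneg_left hM2 (neg_nonneg.mpr hls.le)
    nlinarith [key, mul_nonneg (neg_nonneg.mpr hls.le) hα.le]
  linarith

theorem stmt5 (α x y : ℝ) (hα : 0 < α) (hx : 0 < x) (hy : 0 < y) (hxy : x ≠ y) :
    (x < y → Tendsto (fun ε : ℝ => ncGcdf α (ε⁻¹ * x) (ε⁻¹ * y)) (𝓝[>] 0) (𝓝 0)) ∧
    (y < x → Tendsto (fun ε : ℝ => ncGcdf α (ε⁻¹ * x) (ε⁻¹ * y)) (𝓝[>] 0) (𝓝 1)) := by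
  constructor
  · intro hlt
    set c : ℝ := (x + y) / 2 with hcdef
    have hc : 0 < c := by rw [hcdef]; linarith
    have hxc : x < c := by rw [hcdef]; linarith
    have hcy : c < y := by rw [hcdef]; linarith
    set r : ℝ := c / y with hrdef
    set s : ℝ := c / x - 1 with hsdef
    have hr0 : 0 < r := div_pos hc hy
    have hr1 : r < 1 := (div_lt_one hy).mpr hcy
    have hs0 : 0 < s := by
      rw [hsdef]
      have := (one_lt_div hx).mpr hxc
      linarith
    have hK1 : (r - 1) * y - c * Real.log r < 0 := by
      have h1 : (r - 1) * y = c - y := by rw [hrdef]; field_simp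
      rw [h1, hrdef]
      exact key_neg hc hy (ne_of_lt hcy)
    have hK2 : s * x - c * Real.log (1 + s) < 0 := by
      have h1 : s * x = c - x := by rw [hsdef]; field_simp
      have h2 : 1 + s = c / x := by rw [hsdef]; ring
      rw [h1, h2]
      exact key_neg hc hx (ne_of_gt hxc)
    have hg : Tendsto (fun ε : ℝ =>
        Real.exp (ε⁻¹ * ((r - 1) * y - c * Real.log r) + (-Real.log r))
          + Real.exp (ε⁻¹ * (s * x - c * Real.log (1 + s)) + 0)) (𝓝[>] 0) (𝓝 0) := by
      have := (exp_aux (-Real.log r) hK1).add (exp_aux 0 hK2)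
      rwa [zero_add] at this
    apply squeeze_zero' ?_ ?_ hg
    · filter_upwards [self_mem_nhdsWithin] with ε hε
      have hε' : (0:ℝ) < ε := hε
      exact ncGcdf_nonneg hα (by positivity) (by positivity)
    · filter_upwards [self_mem_nhdsWithin] with ε hε
      exact case1_bound hα hx hy hc hr0 hr1 hs0 hε
  · intro hlt
    set c : ℝ := (x + y) / 2 with hcdef
    have hc : 0 < c := by rw [hcdef]; linarith
    have hyc : y < c := by rw [hcdef]; linarith
    have hcx : c < x := by rw [hcdef]; linarith
    set r : ℝ := c / y with hrdef
    set s : ℝ := 1 - c / x with hsdef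
    have hr1 : 1 < r := (one_lt_div hy).mpr hyc
    have hs0 : 0 < s := by
      rw [hsdef]
      have := (div_lt_one hx).mpr hcx
      linarith
    have hs1 : s < 1 := by
      rw [hsdef]
      have : 0 < c / x := div_pos hc hx
      linarith
    have hK1 : (r - 1) * y - c * Real.log r < 0 := by
      have h1 : (r - 1) * y = c - y := by rw [hrdef]; field_simp
      rw [h1, hrdef]
      exact key_neg hc hy (ne_of_gt hyc)
    have hK2 : -(s * x) - c * Real.log (1 - s) < 0 := by
      have h1 : -(s * x) = c - x := by rw [hsdef]; field_simp; ring
      have h2 : 1 - s = c / x := by rw [hsdef]; ring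
      rw [h1, h2]
      exact key_neg hc hx (ne_of_lt hcx)
    have hL : Tendsto (fun ε : ℝ =>
        1 - Real.exp (ε⁻¹ * ((r - 1) * y - c * Real.log r) + 0)
          - Real.exp (ε⁻¹ * (-(s * x) - c * Real.log (1 - s))
            + (-(α + 1) * Real.log (1 - s)))) (𝓝[>] 0) (𝓝 1) := by
      have := ((tendsto_const_nhds (x := (1:ℝ)) (f := 𝓝[>] (0:ℝ))).sub
        (exp_aux 0 hK1)).sub (exp_aux (-(α + 1) * Real.log (1 - s)) hK2)
      rwa [sub_zero, sub_zero] at this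
    apply tendsto_of_tendsto_of_tendsto_of_le_of_le' hL tendsto_const_nhds
    · filter_upwards [self_mem_nhdsWithin] with ε hε
      exact case2_bound hα hx hy hc hr1 hs0 hs1 hε
    · filter_upwards [self_mem_nhdsWithin] with ε hε
      have hε' : (0:ℝ) < ε := hε
      exact ncGcdf_le_one hα (by positivity) (by positivity)
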